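/- arXiv:math-ph/0510073 — 2 statements merged into one kernel-verified Lean document; each statement's English description precedes it below -/
import Mathlib

section
/- Exponential formula for the complete homogeneous generating function: H(t) = exp(∑_{k≥1} p_k t^k / k) as formal power series over ℚ in n variables. -/
open PowerSeries Finset

/-- The generating function `H(t) = ∑_{k ≥ 0} h_k t^k` of the complete homogeneous
symmetric polynomials in `n` variables over `ℚ`. -/
noncomputable def genH (n : ℕ) : PowerSeries (MvPolynomial (Fin n) ℚ) :=
  PowerSeries.mk fun k => MvPolynomial.hsymm (Fin n) ℚ k

/-- The series `∑_{k ≥ 1} p_k t^k / k`, where `p_k` is the `k`-th power sum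
symmetric polynomial in `n` variables over `ℚ`. -/
noncomputable def genPlog (n : ℕ) : PowerSeries (MvPolynomial (Fin n) ℚ) :=
  PowerSeries.mk fun k =>
    if k = 0 then 0 else ((k : ℚ)⁻¹ : ℚ) • MvPolynomial.psum (Fin n) ℚ k

/-- The formal power series exponential `exp S = ∑_{m ≥ 0} S^m / m!` of a power
series `S` with zero constant term, over a `ℚ`-algebra.  Since the constant term of
`S` vanishes, the coefficient of `t^d` only receives contributions from `m ≤ d`. -/
noncomputable def psExp {A : Type*} [CommRing A] [Algebra ℚ A] (S : PowerSeries A) :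
    PowerSeries A :=
  PowerSeries.mk fun d =>
    ∑ m ∈ Finset.range (d + 1), ((m.factorial : ℚ)⁻¹ : ℚ) • PowerSeries.coeff d (S ^ m)

/-! ### Auxiliary lemmas about `psExp` -/

theorem aux_coeff_pow_zero {A : Type*} [CommRing A] {S : PowerSeries A}
    (hS : constantCoeff S = 0) {d m : ℕ} (h : d < m) : coeff d (S ^ m) = 0 :=
  X_pow_dvd_iff.mp (pow_dvd_pow_of_dvd (X_dvd_iff.mpr hS) m) d h

theorem aux_derivFun_pow {A : Type*} [CommRing A] (S : PowerSeries A) (m : ℕ) :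
    derivativeFun (S ^ (m+1)) = (m+1) • (S ^ m * derivativeFun S) := by
  induction m with
  | zero => simp
  | succ m ih =>
    rw [pow_succ, derivativeFun_mul, ih]
    simp only [smul_eq_mul, succ_nsmul]
    ring

theorem aux_coeff_zero_psExp {A : Type*} [CommRing A] [Algebra ℚ A] (S : PowerSeries A) :
    coeff 0 (psExp S) = 1 := by
  rw [psExp, coeff_mk, Finset.sum_range_one]
  simp

/-- The key recurrence satisfied by the coefficients of `psExp S`. -/
theorem aux_exp_recur {A : Type*} [CommRing A] [Algebra ℚ A] (S : PowerSeries A)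
    (hS : constantCoeff S = 0) (d : ℕ) :
    ((d+1 : ℕ) : A) * coeff (d+1) (psExp S) =
      ∑ ab ∈ antidiagonal d, coeff ab.1 (psExp S) * coeff ab.2 (derivativeFun S) := by
  have key : ∀ m, ((d+1 : ℕ) : A) * coeff (d+1) (S ^ m)
      = coeff d (derivativeFun (S ^ m)) := by
    intro m
    change _ = coeff d (derivative A (S ^ m))
    rw [coeff_derivativeFun]
    push_cast
    ring
  rw [psExp, coeff_mk, mul_sum]
  simp_rw [mul_smul_comm, key]
  rw [Finset.sum_range_succ']
  simp only [pow_zero, derivativeFun_one, map_zero, smul_zero, add_zero]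
  have step : ∀ m, ((m+1).factorial : ℚ)⁻¹ • coeff d (derivativeFun (S ^ (m+1)))
      = ((m.factorial : ℚ)⁻¹) • coeff d (S ^ m * derivativeFun S) := by
    intro m
    rw [aux_derivFun_pow, map_nsmul, ← Nat.cast_smul_eq_nsmul ℚ, smul_smul]
    congr 1
    rw [Nat.factorial_succ]
    push_cast
    rw [mul_inv]
    rw [mul_comm ((m+1:ℚ))⁻¹, mul_assoc, inv_mul_cancel₀ (by positivity)]
    ring
  simp_rw [step, coeff_mul, smul_sum]
  rw [Finset.sum_comm]
  refine Finset.sum_congr rfl fun ab hab => ?_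
  have ha : ab.1 ≤ d := Finset.HasAntidiagonal.antidiagonal.fst_le hab
  rw [coeff_mk, sum_mul]
  refine (Finset.sum_subset (range_subset_range.mpr (by omega)) fun m _ hm => ?_).symm.trans
    (Finset.sum_congr rfl fun m _ => by rw [smul_mul_assoc])
  rw [aux_coeff_pow_zero hS (by simpa using hm)]; simp

/-! ### Newton's identity for the complete homogeneous symmetric polynomials -/

section Newton

variable {σ : Type*} [Fintype σ] [DecidableEq σ] (R : Type*) [CommRing R]

/-- The product of the variables indexed by a multiset. -/
noncomputable def auxMprod (s : Multiset σ) : MvPolynomial σ R :=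
  (s.map MvPolynomial.X).prod

theorem auxMprod_add (s t : Multiset σ) :
    auxMprod R (s + t) = auxMprod R s * auxMprod R t := by
  simp [auxMprod]

theorem auxMprod_replicate (j : ℕ) (i : σ) :
    auxMprod R (Multiset.replicate j i) = MvPolynomial.X i ^ j := by
  simp [auxMprod]

/-- The finset of multisets of `σ` of cardinality `m`. -/
noncomputable def auxSymSet (m : ℕ) : Finset (Multiset σ) :=
  (Finset.univ : Finset (Sym σ m)).map ⟨Sym.toMultiset, fun a b h => Subtype.ext h⟩

theorem mem_auxSymSet {m : ℕ} {t : Multiset σ} :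
    t ∈ (auxSymSet m : Finset (Multiset σ)) ↔ Multiset.card t = m := by
  simp only [auxSymSet, Finset.mem_map, Finset.mem_univ, true_and,
    Function.Embedding.coeFn_mk]
  constructor
  · rintro ⟨s, rfl⟩; exact s.2
  · intro h; exact ⟨⟨t, h⟩, rfl⟩

theorem hsymm_eq_sum (m : ℕ) :
    MvPolynomial.hsymm σ R m = ∑ t ∈ auxSymSet m, auxMprod R t := by
  rw [MvPolynomial.hsymm, auxSymSet, Finset.sum_map]
  simp only [auxMprod, Function.Embedding.coeFn_mk]
  rfl

/-- Newton's identity relating the complete homogeneous symmetric polynomials and the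
power sums: `(k+1) h_{k+1} = ∑_{a+b=k} h_a p_{b+1}`. -/
theorem aux_newton (k : ℕ) :
    ((k+1 : ℕ) : MvPolynomial σ R) * MvPolynomial.hsymm σ R (k+1) =
      ∑ ab ∈ antidiagonal k, MvPolynomial.hsymm σ R ab.1 * MvPolynomial.psum σ R (ab.2+1) := by
  have rhs : ∑ ab ∈ antidiagonal k, MvPolynomial.hsymm σ R ab.1 * MvPolynomial.psum σ R (ab.2+1)
      = ∑ x ∈ (antidiagonal k).sigma (fun ab => (auxSymSet ab.1).sigma
          (fun _ => (Finset.univ : Finset σ))),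
          auxMprod R x.2.1 * MvPolynomial.X x.2.2 ^ (x.1.2+1) := by
    rw [Finset.sum_sigma]
    refine Finset.sum_congr rfl fun ab _ => ?_
    rw [Finset.sum_sigma, hsymm_eq_sum, MvPolynomial.psum, Finset.sum_mul_sum]
  have lhs : ((k+1 : ℕ) : MvPolynomial σ R) * MvPolynomial.hsymm σ R (k+1)
      = ∑ x ∈ (auxSymSet (k+1) : Finset (Multiset σ)).sigma
          (fun t => (Finset.univ : Finset σ).sigma (fun i => range (t.count i))),
          auxMprod R x.1 := by
    rw [Finset.sum_sigma, hsymm_eq_sum, Finset.mul_sum]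
    refine Finset.sum_congr rfl fun t ht => ?_
    rw [Finset.sum_sigma]
    have hcard : ∑ i : σ, t.count i = k + 1 := by
      rw [← mem_auxSymSet.mp ht]
      rw [← Multiset.toFinset_sum_count_eq]
      exact (Finset.sum_subset (Finset.subset_univ _) (fun i _ hi => by
        simpa [Multiset.count_eq_zero] using fun h => hi (Multiset.mem_toFinset.mpr h))).symm
    calc ((k+1 : ℕ) : MvPolynomial σ R) * auxMprod R t = (k+1) • auxMprod R t := by
          rw [nsmul_eq_mul]
      _ = ∑ i : σ, (t.count i) • auxMprod R t := by rw [← hcard, Finset.sum_smul]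
      _ = ∑ i : σ, ∑ _j ∈ range (t.count i), auxMprod R t := by
          simp [Finset.sum_const]
  rw [lhs, rhs]
  refine Finset.sum_nbij'
    (fun x => ⟨(k - x.2.2, x.2.2), ⟨x.1 - Multiset.replicate (x.2.2+1) x.2.1, x.2.1⟩⟩)
    (fun y => ⟨y.2.1 + Multiset.replicate (y.1.2+1) y.2.2, ⟨y.2.2, y.1.2⟩⟩)
    ?_ ?_ ?_ ?_ ?_
  · rintro ⟨t, i, j⟩ hx
    simp only [Finset.mem_sigma, mem_auxSymSet, Finset.mem_univ, true_and, Finset.mem_range,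
      Finset.HasAntidiagonal.mem_antidiagonal] at hx ⊢
    obtain ⟨htc, hj⟩ := hx
    have hle : Multiset.replicate (j+1) i ≤ t := Multiset.le_count_iff_replicate_le.mp hj
    have hjk : j ≤ k := by
      have := (Multiset.count_le_card i t)
      omega
    refine ⟨by omega, ?_, trivial⟩
    rw [Multiset.card_sub hle, htc, Multiset.card_replicate]
    omega
  · rintro ⟨⟨a, b⟩, s, i⟩ hy
    simp only [Finset.mem_sigma, mem_auxSymSet, Finset.mem_univ, true_and, Finset.mem_range,
      Finset.HasAntidiagonal.mem_antidiagonal] at hy ⊢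
    obtain ⟨hab, hs, -⟩ := hy
    constructor
    · rw [Multiset.card_add, Multiset.card_replicate, hs]; omega
    · rw [Multiset.count_add, Multiset.count_replicate, if_pos rfl]; omega
  · rintro ⟨t, i, j⟩ hx
    simp only [Finset.mem_sigma, mem_auxSymSet, Finset.mem_univ, true_and,
      Finset.mem_range] at hx
    have hle : Multiset.replicate (j+1) i ≤ t := Multiset.le_count_iff_replicate_le.mp hx.2
    dsimp only
    simp only [tsub_add_cancel_of_le hle]
  · rintro ⟨⟨a, b⟩, s, i⟩ hy
    simp only [Finset.mem_sigma, mem_auxSymSet, Finset.mem_univ, true_and,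
      Finset.HasAntidiagonal.mem_antidiagonal] at hy
    dsimp only
    rw [show k - b = a by omega, add_tsub_cancel_right]
  · rintro ⟨t, i, j⟩ hx
    simp only [Finset.mem_sigma, mem_auxSymSet, Finset.mem_univ, true_and,
      Finset.mem_range] at hx
    have hle : Multiset.replicate (j+1) i ≤ t := Multiset.le_count_iff_replicate_le.mp hx.2
    rw [← auxMprod_replicate R (j+1) i, ← auxMprod_add, tsub_add_cancel_of_le hle]

end Newton

/-! ### The main theorem -/

theorem aux_constantCoeff_genPlog (n : ℕ) : constantCoeff (genPlog n) = 0 := by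
  rw [← coeff_zero_eq_constantCoeff_apply, genPlog, coeff_mk, if_pos rfl]

theorem aux_coeff_deriv_genPlog (n : ℕ) (b : ℕ) :
    coeff b (derivativeFun (genPlog n)) = MvPolynomial.psum (Fin n) ℚ (b+1) := by
  change coeff b (derivative _ (genPlog n)) = _
  rw [coeff_derivativeFun, genPlog, coeff_mk, if_neg (Nat.succ_ne_zero b)]
  have h1 : ((b : MvPolynomial (Fin n) ℚ) + 1) = MvPolynomial.C ((b : ℚ) + 1) := by
    rw [← map_natCast (MvPolynomial.C (R := ℚ) (σ := Fin n)) b, ← MvPolynomial.C_1,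
      ← MvPolynomial.C_add]
  rw [show ((b + 1 : ℕ) : ℚ) = (b : ℚ) + 1 by push_cast; ring, h1,
    MvPolynomial.smul_eq_C_mul, mul_comm, ← mul_assoc, ← MvPolynomial.C_mul,
    mul_inv_cancel₀ (by positivity : (b : ℚ) + 1 ≠ 0), MvPolynomial.C_1, one_mul]

/-- Exponential formula: `H(t) = exp (∑_{k ≥ 1} p_k t^k / k)`. -/
theorem genH_eq_exp (n : ℕ) : genH n = psExp (genPlog n) := by
  refine PowerSeries.ext fun k => ?_
  induction k using Nat.strong_induction_on with
  | _ k ih =>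
    match k with
    | 0 =>
      rw [genH, coeff_mk, aux_coeff_zero_psExp, MvPolynomial.hsymm_zero]
    | (d+1) =>
      have hE := aux_exp_recur (genPlog n) (aux_constantCoeff_genPlog n) d
      have hN := aux_newton (σ := Fin n) ℚ d
      have hER : ((d+1 : ℕ) : MvPolynomial (Fin n) ℚ) * coeff (d+1) (psExp (genPlog n))
          = ((d+1 : ℕ) : MvPolynomial (Fin n) ℚ) * MvPolynomial.hsymm (Fin n) ℚ (d+1) := by
        rw [hE, hN]
        refine Finset.sum_congr rfl fun ab hab => ?_
        have ha : ab.1 ≤ d := Finset.HasAntidiagonal.antidiagonal.fst_le hab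
        rw [aux_coeff_deriv_genPlog, ← ih ab.1 (by omega), genH, coeff_mk]
      have hne : ((d+1 : ℕ) : MvPolynomial (Fin n) ℚ) ≠ 0 :=
        Nat.cast_ne_zero.mpr (Nat.succ_ne_zero d)
      rw [genH, coeff_mk]
      exact (mul_left_cancel₀ hne hER).symm
end

section
/- The phase-model L-matrix L_n(u) = [[u^{-1}I, φ_n†],[φ_n, uI]] satisfies the RLL bilinear relation R(u,v)(L_n(u) ⊗ L_n(v)) = (L_n(v) ⊗ L_n(u))R(u,v) with the 4×4 R-matrix R(u,v) = diag-block matrix with entries f(v,u) on corners, and middle 2×2 block [[g(v,u), 1],[0, g(v,u)]], where f(v,u) = u²/(u²−v²), g(v,u) = uv/(u²−v²). -/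
open Kronecker

noncomputable section

/-- The one-dimensional Fock space, with basis `|n⟩`, `n ≥ 0`. -/
abbrev Fock := ℕ →₀ ℚ

/-- Operators on the Fock space. -/
abbrev FockOp := Module.End ℚ Fock

/-- The phase creation operator `φ† |n⟩ = |n+1⟩`. -/
def phiDag : FockOp := Finsupp.lsum ℚ fun n => Finsupp.lsingle (n + 1)

/-- The phase annihilation operator `φ |n⟩ = |n-1⟩`, `φ |0⟩ = 0`. -/
def phi : FockOp := Finsupp.lsum ℚ fun n => if n = 0 then 0 else Finsupp.lsingle (n - 1)

/-- The phase-model `L`-matrix `L(u) = [[u⁻¹ I, φ†], [φ, u I]]`. -/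
def Lmat (u : ℚ) : Matrix (Fin 2) (Fin 2) FockOp :=
  !![u⁻¹ • (1 : FockOp), phiDag; phi, u • (1 : FockOp)]

/-- The phase-model `R`-matrix `R(u,v) = [[f,0,0,0],[0,g,1,0],[0,0,g,0],[0,0,0,f]]`,
with rows and columns indexed by `Fin 2 × Fin 2` in lexicographic order, where
`f = f(v,u)` and `g = g(v,u)` are scalars. -/
def Rmat (f g : ℚ) : Matrix (Fin 2 × Fin 2) (Fin 2 × Fin 2) FockOp :=
  fun p q =>
    if p = q then (if p.1 = p.2 then f • (1 : FockOp) else g • (1 : FockOp))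
    else if p = ((0 : Fin 2), (1 : Fin 2)) ∧ q = ((1 : Fin 2), (0 : Fin 2)) then 1 else 0

lemma phi_mul_phiDag : phi * phiDag = (1 : FockOp) := by
  apply Finsupp.lhom_ext
  intro n q
  simp [phi, phiDag, Module.End.mul_apply]

set_option maxHeartbeats 4000000 in
/-- The `RLL` bilinear relation `R(u,v) (L(u) ⊗ L(v)) = (L(v) ⊗ L(u)) R(u,v)` for the
phase model, with `f(v,u) = u²/(u² - v²)` and `g(v,u) = uv/(u² - v²)`. -/
theorem phase_RLL (u v : ℚ) (hu : u ≠ 0) (hv : v ≠ 0) (huv : u ^ 2 ≠ v ^ 2) :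
    Rmat (u ^ 2 / (u ^ 2 - v ^ 2)) (u * v / (u ^ 2 - v ^ 2)) * (Lmat u ⊗ₖ Lmat v) =
      (Lmat v ⊗ₖ Lmat u) * Rmat (u ^ 2 / (u ^ 2 - v ^ 2)) (u * v / (u ^ 2 - v ^ 2)) := by
  have hd : u ^ 2 - v ^ 2 ≠ 0 := sub_ne_zero.mpr huv
  refine Matrix.ext fun p q => ?_
  obtain ⟨i, j⟩ := p; obtain ⟨k, l⟩ := q
  simp only [Matrix.mul_apply, Fintype.sum_prod_type, Fin.sum_univ_two,
    Matrix.kroneckerMap_apply]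
  fin_cases i <;> fin_cases j <;> fin_cases k <;> fin_cases l <;>
    simp [Rmat, Lmat, Prod.ext_iff, smul_smul, mul_smul_comm, smul_mul_assoc,
      phi_mul_phiDag] <;>
    (try ring1) <;> match_scalars <;> (try field_simp) <;> ring

end
end
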